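/- Let N ≥ 2 and let m_1, …, m_N satisfy 0 < m_i < 1 for every i and m̄ := (1/N) Σ_{i=1}^N m_i > 1 − 2/N; set α := N/(N(m̄ − 1) + 2), σ_i := 1/N + (m̄ − m_i)/2. Let γ > 0 and 0 < ϑ_i ≤ 1 satisfy 1/(γ ϑ_i) < (1 − m_i)/2 for every i, and let A > 0 satisfy N γ m_i (γ m_i + 1) ϑ_i² A^{γ − γ m_i − 2/ϑ_i} ≥ α (γ max_j{σ_j ϑ_j} − 1) for every i. Then the function F̲(y) := (A + Σ_{i=1}^N |y_i|^{ϑ_i})^{−γ} satisfies: (a) the subsolution inequality Σ_{i=1}^N [∂²_{y_i y_i}(F̲^{m_i}) + α σ_i ∂_{y_i}(y_i F̲)] ≥ 0 at every point y ∈ ℝ^N with y_i ≠ 0 for all i; and (b) F̲ ∈ L¹(ℝ^N). -/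

import Mathlib

open MeasureTheory

/-- First partial derivative of `f` in the `i`-th coordinate direction. -/
noncomputable def pd1 {N : ℕ} (i : Fin N) (f : (Fin N → ℝ) → ℝ) (x : Fin N → ℝ) : ℝ :=
  deriv (fun s => f (Function.update x i s)) (x i)

/-- Second partial derivative of `f` in the `i`-th coordinate direction. -/
noncomputable def pd2 {N : ℕ} (i : Fin N) (f : (Fin N → ℝ) → ℝ) (x : Fin N → ℝ) : ℝ :=
  deriv (deriv (fun s => f (Function.update x i s))) (x i)

open Real Filter

lemma my_hasDerivAt_abs_rpow (ϑ : ℝ) {s : ℝ} (hs : s ≠ 0) :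
    HasDerivAt (fun x : ℝ => |x| ^ ϑ) (ϑ * |s| ^ (ϑ - 2) * s) s := by
  rcases hs.lt_or_gt with h | h
  · have hev : (fun x : ℝ => |x| ^ ϑ) =ᶠ[nhds s] fun x => (-x) ^ ϑ := by
      filter_upwards [Iio_mem_nhds h] with x hx
      rw [abs_of_neg hx]
    have hd : HasDerivAt (fun x : ℝ => (-x) ^ ϑ) (ϑ * (-s) ^ (ϑ - 1) * (-1)) s := by
      exact (Real.hasDerivAt_rpow_const (Or.inl (neg_ne_zero.2 hs))).comp s (hasDerivAt_neg s)
    have := hd.congr_of_eventuallyEq hev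
    refine this.congr_deriv ?_
    rw [abs_of_neg h]
    rw [show ϑ - 1 = (ϑ - 2) + 1 by ring, Real.rpow_add_one (neg_ne_zero.2 hs)]
    ring
  · have hev : (fun x : ℝ => |x| ^ ϑ) =ᶠ[nhds s] fun x => x ^ ϑ := by
      filter_upwards [Ioi_mem_nhds h] with x hx
      rw [abs_of_pos hx]
    have hd := (Real.hasDerivAt_rpow_const (p := ϑ) (Or.inl hs)).congr_of_eventuallyEq hev
    refine hd.congr_deriv ?_
    rw [abs_of_pos h, show ϑ - 1 = (ϑ - 2) + 1 by ring, Real.rpow_add_one hs]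
    ring


lemma my_hasDerivAt_base (C ϑ p : ℝ) (hC : 0 < C) {s : ℝ} (hs : s ≠ 0) :
    HasDerivAt (fun x : ℝ => (C + |x| ^ ϑ) ^ p)
      (p * (C + |s| ^ ϑ) ^ (p - 1) * (ϑ * |s| ^ (ϑ - 2) * s)) s := by
  have hpos : (0:ℝ) < C + |s| ^ ϑ := by positivity
  have h := ((my_hasDerivAt_abs_rpow ϑ hs).const_add C).rpow_const (p := p) (Or.inl hpos.ne')
  convert h using 1
  ring

lemma my_mulself (s : ℝ) (hs : s ≠ 0) (e : ℝ) : |s| ^ e * s * s = |s| ^ (e + 2) := by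
  have ha : (0:ℝ) < |s| := abs_pos.2 hs
  rw [show e + 2 = e + 1 + 1 by ring, Real.rpow_add_one ha.ne', Real.rpow_add_one ha.ne',
    mul_assoc, ← abs_mul_abs_self s]
  ring

lemma my_secondDeriv (C ϑ q : ℝ) (hC : 0 < C) {s : ℝ} (hs : s ≠ 0) :
    deriv (deriv (fun x : ℝ => (C + |x| ^ ϑ) ^ (-q))) s
      = q * (q + 1) * ϑ ^ 2 * |s| ^ (2 * ϑ - 2) * (C + |s| ^ ϑ) ^ (-q - 2)
        - q * ϑ * (ϑ - 1) * |s| ^ (ϑ - 2) * (C + |s| ^ ϑ) ^ (-q - 1) := by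
  have ha : (0:ℝ) < |s| := abs_pos.2 hs
  set g : ℝ → ℝ := fun x => (-q) * (C + |x| ^ ϑ) ^ (-q - 1) * (ϑ * |x| ^ (ϑ - 2) * x) with hg
  have hev : deriv (fun x : ℝ => (C + |x| ^ ϑ) ^ (-q)) =ᶠ[nhds s] g := by
    filter_upwards [compl_singleton_mem_nhds hs] with x hx
    exact (my_hasDerivAt_base C ϑ (-q) hC (hx : x ≠ 0)).deriv
  rw [hev.deriv_eq]
  have h1 : HasDerivAt (fun x : ℝ => (C + |x| ^ ϑ) ^ (-q - 1))
      ((-q - 1) * (C + |s| ^ ϑ) ^ (-q - 1 - 1) * (ϑ * |s| ^ (ϑ - 2) * s)) s :=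
    my_hasDerivAt_base C ϑ (-q - 1) hC hs
  have h2 : HasDerivAt (fun x : ℝ => |x| ^ (ϑ - 2) * x)
      (((ϑ - 2) * |s| ^ (ϑ - 2 - 2) * s) * s + |s| ^ (ϑ - 2) * 1) s :=
    (my_hasDerivAt_abs_rpow (ϑ - 2) hs).mul (hasDerivAt_id s)
  have hgeq : g = fun x : ℝ =>
      (-q * ϑ) * ((C + |x| ^ ϑ) ^ (-q - 1) * (|x| ^ (ϑ - 2) * x)) := by
    funext x; simp only [hg]; ring
  have h3 : HasDerivAt g
      ((-q * ϑ) * (((-q - 1) * (C + |s| ^ ϑ) ^ (-q - 1 - 1) * (ϑ * |s| ^ (ϑ - 2) * s))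
          * (|s| ^ (ϑ - 2) * s)
        + (C + |s| ^ ϑ) ^ (-q - 1)
          * (((ϑ - 2) * |s| ^ (ϑ - 2 - 2) * s) * s + |s| ^ (ϑ - 2) * 1))) s := by
    rw [hgeq]
    exact (h1.mul h2).const_mul (-q * ϑ)
  rw [h3.deriv]
  have e1 : |s| ^ (ϑ - 2 - 2) * s * s = |s| ^ (ϑ - 2) := by
    rw [my_mulself s hs]; norm_num
  have e2 : |s| ^ (ϑ - 2) * s * (|s| ^ (ϑ - 2) * s) = |s| ^ (2 * ϑ - 2) := by
    calc |s| ^ (ϑ - 2) * s * (|s| ^ (ϑ - 2) * s)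
        = (|s| ^ (ϑ - 2) * |s| ^ (ϑ - 2)) * s * s := by ring
      _ = |s| ^ (ϑ - 2 + (ϑ - 2)) * s * s := by rw [← Real.rpow_add ha]
      _ = |s| ^ (ϑ - 2 + (ϑ - 2) + 2) := my_mulself s hs _
      _ = |s| ^ (2 * ϑ - 2) := by ring_nf
  have e3 : (-q : ℝ) - 1 - 1 = -q - 2 := by ring
  rw [e3, ← e2, ← e1]
  ring

lemma my_firstDeriv_mul (C ϑ γ : ℝ) (hC : 0 < C) {s : ℝ} (hs : s ≠ 0) :
    HasDerivAt (fun x : ℝ => x * (C + |x| ^ ϑ) ^ (-γ))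
      ((C + |s| ^ ϑ) ^ (-γ) - γ * ϑ * |s| ^ ϑ * (C + |s| ^ ϑ) ^ (-γ - 1)) s := by
  have h := (hasDerivAt_id s).mul (my_hasDerivAt_base C ϑ (-γ) hC hs)
  refine h.congr_deriv ?_
  simp only [id_eq, one_mul, mul_one]
  have e1 : |s| ^ (ϑ - 2) * s * s = |s| ^ ϑ := by rw [my_mulself s hs]; norm_num
  rw [← e1]
  ring

lemma my_integrable_1d (b ϑ p : ℝ) (hb : 0 < b) (hϑ : 0 < ϑ) (hp : 0 < p)
    (hpϑ : 1 < ϑ * p) :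
    Integrable (fun s : ℝ => (b + |s| ^ ϑ) ^ (-p)) := by
  have hcont : Continuous fun s : ℝ => (b + |s| ^ ϑ) ^ (-p) :=
    (continuous_const.add (continuous_abs.rpow_const fun x => Or.inr hϑ.le)).rpow_const
      fun x => Or.inl (ne_of_gt (add_pos_of_pos_of_nonneg hb (Real.rpow_nonneg (abs_nonneg x) ϑ)))
  set r : ℝ := ϑ * p with hr
  set K : ℝ := 2 ^ r * max 1 (b ^ (-p)) with hK
  have hKpos : 0 < K := by positivity
  have hint : Integrable (fun s : ℝ => K * (1 + ‖s‖) ^ (-r)) := by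
    refine (integrable_one_add_norm ?_).const_mul K
    rw [Module.finrank_self]
    exact_mod_cast hpϑ
  refine hint.mono' hcont.aestronglyMeasurable (Filter.Eventually.of_forall fun s => ?_)
  have hbase : (0:ℝ) < b + |s| ^ ϑ := by positivity
  rw [Real.norm_eq_abs, abs_of_nonneg (Real.rpow_nonneg hbase.le _), Real.norm_eq_abs]
  have h1a : (0:ℝ) < 1 + |s| := by positivity
  rcases le_or_gt (|s|) 1 with hle | hlt
  · have hL : (b + |s| ^ ϑ) ^ (-p) ≤ b ^ (-p) :=
      Real.rpow_le_rpow_of_nonpos hb (le_add_of_nonneg_right (by positivity))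
        (by linarith : -p ≤ 0)
    have hR : (2:ℝ) ^ (-r) ≤ (1 + |s|) ^ (-r) :=
      Real.rpow_le_rpow_of_nonpos h1a (by linarith) (by nlinarith : -r ≤ 0)
    calc (b + |s| ^ ϑ) ^ (-p) ≤ b ^ (-p) := hL
      _ = (2 ^ r * b ^ (-p)) * 2 ^ (-r) := by
          rw [Real.rpow_neg (by norm_num : (0:ℝ) ≤ 2)]
          field_simp
      _ ≤ K * (1 + |s|) ^ (-r) := by
          apply mul_le_mul
          · rw [hK]
            have : b ^ (-p) ≤ max 1 (b ^ (-p)) := le_max_right _ _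
            nlinarith [Real.rpow_pos_of_pos (by norm_num : (0:ℝ) < 2) r]
          · exact hR
          · positivity
          · positivity
  · have hmid : ((1 + |s|) / 2) ^ ϑ ≤ b + |s| ^ ϑ := by
      have h1 : ((1 + |s|) / 2) ^ ϑ ≤ |s| ^ ϑ :=
        Real.rpow_le_rpow (by positivity) (by linarith) hϑ.le
      linarith
    have hmp : (0:ℝ) < ((1 + |s|) / 2) ^ ϑ := by positivity
    have hL : (b + |s| ^ ϑ) ^ (-p) ≤ (((1 + |s|) / 2) ^ ϑ) ^ (-p) :=
      Real.rpow_le_rpow_of_nonpos hmp hmid (by linarith : -p ≤ 0)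
    have hE : (((1 + |s|) / 2) ^ ϑ) ^ (-p) = 2 ^ r * (1 + |s|) ^ (-r) := by
      rw [← Real.rpow_mul (by positivity : (0:ℝ) ≤ (1 + |s|) / 2),
        show ϑ * -p = -r by rw [hr]; ring,
        Real.div_rpow (by positivity : (0:ℝ) ≤ 1 + |s|) (by norm_num : (0:ℝ) ≤ 2),
        Real.rpow_neg (by norm_num : (0:ℝ) ≤ 2)]
      rw [div_eq_mul_inv, inv_inv]
      ring
    calc (b + |s| ^ ϑ) ^ (-p) ≤ (((1 + |s|) / 2) ^ ϑ) ^ (-p) := hL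
      _ = 2 ^ r * (1 + |s|) ^ (-r) := hE
      _ ≤ K * (1 + |s|) ^ (-r) := by
          apply mul_le_mul_of_nonneg_right _ (by positivity)
          rw [hK]
          nlinarith [Real.rpow_pos_of_pos (by norm_num : (0:ℝ) < 2) r,
            le_max_left (1:ℝ) (b ^ (-p))]

set_option maxHeartbeats 2000000 in
/-- the anisotropic lower barrier `F̲(y) = (A + Σ_i |y_i|^{ϑ_i})^{-γ}` is a
subsolution of the stationary profile equation away from the coordinate hyperplanes, and
it is integrable on `ℝ^N`. -/
theorem lower_barrier_subsolution (N : ℕ) (hN : 2 ≤ N) (m : Fin N → ℝ)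
    (hm : ∀ i, 0 < m i ∧ m i < 1)
    (mbar α : ℝ) (σ : Fin N → ℝ)
    (hmbar : mbar = (1 / (N : ℝ)) * ∑ i, m i)
    (hH2 : 1 - 2 / (N : ℝ) < mbar)
    (hα : α = (N : ℝ) / ((N : ℝ) * (mbar - 1) + 2))
    (hσ : ∀ i, σ i = 1 / (N : ℝ) + (mbar - m i) / 2)
    (γ : ℝ) (hγ : 0 < γ) (ϑ : Fin N → ℝ) (hϑ : ∀ i, 0 < ϑ i ∧ ϑ i ≤ 1)
    (hcond : ∀ i, 1 / (γ * ϑ i) < (1 - m i) / 2)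
    (A : ℝ) (hA : 0 < A)
    (hAbig : ∀ i, α * (γ * (⨆ j, σ j * ϑ j) - 1) ≤
      (N : ℝ) * γ * m i * (γ * m i + 1) * ϑ i ^ 2 * A ^ (γ - γ * m i - 2 / ϑ i))
    (Funder : (Fin N → ℝ) → ℝ)
    (hFunder : ∀ y : Fin N → ℝ, Funder y = (A + ∑ i, |y i| ^ ϑ i) ^ (-γ)) :
    (∀ y : Fin N → ℝ, (∀ i, y i ≠ 0) →
      0 ≤ ∑ i, (pd2 i (fun z => Funder z ^ m i) y
        + α * σ i * pd1 i (fun z => z i * Funder z) y)) ∧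
    Integrable Funder := by
  have hNpos : (0:ℝ) < N := by
    have : 0 < N := by omega
    exact_mod_cast this
  have hNne : (N:ℝ) ≠ 0 := hNpos.ne'
  have : Nonempty (Fin N) := ⟨⟨0, by omega⟩⟩
  -- basic positivity facts
  have hϑpos : ∀ i, 0 < ϑ i := fun i => (hϑ i).1
  have h2cond : ∀ i, 2 < γ * ϑ i * (1 - m i) := by
    intro i
    have h := hcond i
    rw [div_lt_div_iff₀ (mul_pos hγ (hϑpos i)) two_pos] at h
    nlinarith [h]
  have hei : ∀ i, 0 < γ - γ * m i - 2 / ϑ i := by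
    intro i
    have h2 := h2cond i
    have h3 : 2 / ϑ i < γ * (1 - m i) := by
      rw [div_lt_iff₀ (hϑpos i)]; nlinarith
    have h4 : γ * (1 - m i) = γ - γ * m i := by ring
    linarith
  have hσpos : ∀ i, 0 < σ i := by
    intro i
    rw [hσ i]
    have h1 : (1:ℝ)/(N:ℝ) = (2/(N:ℝ))/2 := by ring
    have := (hm i).2
    linarith
  have hαpos : 0 < α := by
    rw [hα]
    apply div_pos hNpos
    have h1 : (N:ℝ) * (mbar - 1) > (N:ℝ) * (-(2/(N:ℝ))) := by
      apply mul_lt_mul_of_pos_left _ hNpos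
      linarith
    have h2 : (N:ℝ) * (-(2/(N:ℝ))) = -2 := by field_simp
    linarith
  have hsm : ∑ i, m i = (N:ℝ) * mbar := by
    rw [hmbar]; field_simp
  have hσsum : ∑ i, σ i = 1 := by
    calc ∑ i, σ i = ∑ i, (1/(N:ℝ) + (mbar - m i)/2) := Finset.sum_congr rfl fun i _ => hσ i
      _ = (N:ℝ) * (1/(N:ℝ)) + ((N:ℝ) * mbar - ∑ i, m i)/2 := by
          rw [Finset.sum_add_distrib, Finset.sum_const, Finset.card_univ, Fintype.card_fin,
            nsmul_eq_mul, ← Finset.sum_div, Finset.sum_sub_distrib, Finset.sum_const,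
            Finset.card_univ, Fintype.card_fin, nsmul_eq_mul]
      _ = 1 := by rw [hsm]; field_simp; ring
  constructor
  · -- part (a)
    intro y hy
    have hti : ∀ i, 0 < |y i| ^ ϑ i := fun i => Real.rpow_pos_of_pos (abs_pos.2 (hy i)) _
    set S : ℝ := A + ∑ j, |y j| ^ ϑ j with hSdef
    have hS0 : 0 < S := by positivity
    have hAS : A ≤ S := le_add_of_nonneg_right (Finset.sum_nonneg fun j _ => (hti j).le)
    have htS : ∀ i, |y i| ^ ϑ i ≤ S := by
      intro i
      have h1 : |y i| ^ ϑ i ≤ ∑ j, |y j| ^ ϑ j :=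
        Finset.single_le_sum (fun j _ => (hti j).le) (Finset.mem_univ i)
      linarith
    set M : ℝ := ⨆ j, σ j * ϑ j with hMdef
    have hM : ∀ i, σ i * ϑ i ≤ M := by
      intro i
      rw [hMdef]
      exact le_ciSup (f := fun j => σ j * ϑ j) (Set.Finite.bddAbove (Set.finite_range _)) i
    have hMpos : 0 < M := by
      obtain ⟨i⟩ := ‹Nonempty (Fin N)›
      exact lt_of_lt_of_le (mul_pos (hσpos i) (hϑpos i)) (hM i)
    have hCpos : ∀ i : Fin N, 0 < A + ∑ j ∈ Finset.univ.erase i, |y j| ^ ϑ j := by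
      intro i
      have : 0 ≤ ∑ j ∈ Finset.univ.erase i, |y j| ^ ϑ j :=
        Finset.sum_nonneg fun j _ => (hti j).le
      linarith
    have hCt : ∀ i : Fin N, (A + ∑ j ∈ Finset.univ.erase i, |y j| ^ ϑ j) + |y i| ^ ϑ i = S := by
      intro i
      have h := Finset.add_sum_erase Finset.univ (fun j => |y j| ^ ϑ j) (Finset.mem_univ i)
      rw [hSdef, ← h]; ring
    have hsec : ∀ (i : Fin N) (s : ℝ), A + ∑ j, |Function.update y i s j| ^ ϑ j
        = (A + ∑ j ∈ Finset.univ.erase i, |y j| ^ ϑ j) + |s| ^ ϑ i := by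
      intro i s
      rw [← Finset.add_sum_erase Finset.univ (fun j => |Function.update y i s j| ^ ϑ j)
        (Finset.mem_univ i), Function.update_self]
      have h2 : ∑ j ∈ Finset.univ.erase i, |Function.update y i s j| ^ ϑ j
          = ∑ j ∈ Finset.univ.erase i, |y j| ^ ϑ j :=
        Finset.sum_congr rfl fun j hj => by
          rw [Function.update_of_ne (Finset.ne_of_mem_erase hj)]
      rw [h2]; ring
    have hpd2 : ∀ i, pd2 i (fun z => Funder z ^ m i) y
        = γ * m i * (γ * m i + 1) * ϑ i ^ 2 * |y i| ^ (2 * ϑ i - 2) * S ^ (-(γ * m i) - 2)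
          - γ * m i * ϑ i * (ϑ i - 1) * |y i| ^ (ϑ i - 2) * S ^ (-(γ * m i) - 1) := by
      intro i
      have hfun : (fun s : ℝ => Funder (Function.update y i s) ^ m i)
          = fun s : ℝ => ((A + ∑ j ∈ Finset.univ.erase i, |y j| ^ ϑ j) + |s| ^ ϑ i)
              ^ (-(γ * m i)) := by
        funext s
        rw [hFunder, hsec i s, ← Real.rpow_mul (by positivity), neg_mul]
      show deriv (deriv fun s => Funder (Function.update y i s) ^ m i) (y i) = _
      rw [hfun, my_secondDeriv _ _ _ (hCpos i) (hy i), hCt i]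
    have hpd1 : ∀ i, pd1 i (fun z => z i * Funder z) y
        = S ^ (-γ) - γ * ϑ i * |y i| ^ ϑ i * S ^ (-γ - 1) := by
      intro i
      have hfun : (fun s : ℝ => Function.update y i s i * Funder (Function.update y i s))
          = fun s : ℝ => s * ((A + ∑ j ∈ Finset.univ.erase i, |y j| ^ ϑ j) + |s| ^ ϑ i)
              ^ (-γ) := by
        funext s
        rw [Function.update_self, hFunder, hsec i s]
      show deriv (fun s => Function.update y i s i * Funder (Function.update y i s)) (y i) = _
      rw [hfun, HasDerivAt.deriv (my_firstDeriv_mul _ _ γ (hCpos i) (hy i)), hCt i]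
    -- the per-index lower bound
    have key : ∀ i : Fin N,
        α * (γ * M - 1) / N * S ^ (-γ) + α * σ i * S ^ (-γ)
          - α * γ * M * (|y i| ^ ϑ i) * S ^ (-γ - 1)
        ≤ pd2 i (fun z => Funder z ^ m i) y
          + α * σ i * pd1 i (fun z => z i * Funder z) y := by
      intro i
      rw [hpd2 i, hpd1 i]
      have hqpos : 0 < γ * m i := mul_pos hγ (hm i).1
      have hb1 : α * (γ * M - 1) / N * S ^ (-γ)
          ≤ γ * m i * (γ * m i + 1) * ϑ i ^ 2 * |y i| ^ (2 * ϑ i - 2) * S ^ (-(γ * m i) - 2) := by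
        have h5 : α * (γ * M - 1) / N ≤ γ * m i * (γ * m i + 1) * ϑ i ^ 2
            * A ^ (γ - γ * m i - 2 / ϑ i) := by
          rw [div_le_iff₀ hNpos]
          calc α * (γ * M - 1) ≤ (N:ℝ) * γ * m i * (γ * m i + 1) * ϑ i ^ 2
              * A ^ (γ - γ * m i - 2 / ϑ i) := hAbig i
            _ = γ * m i * (γ * m i + 1) * ϑ i ^ 2 * A ^ (γ - γ * m i - 2 / ϑ i) * N := by ring
        have hAe : A ^ (γ - γ * m i - 2 / ϑ i) ≤ S ^ (γ - γ * m i - 2 / ϑ i) :=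
          Real.rpow_le_rpow hA.le hAS (hei i).le
        have hcpos : (0:ℝ) ≤ γ * m i * (γ * m i + 1) * ϑ i ^ 2 := by positivity
        have hstep : S ^ (2 - 2 / ϑ i) ≤ |y i| ^ (2 * ϑ i - 2) := by
          have h7 : |y i| ^ (2 * ϑ i - 2) = (|y i| ^ ϑ i) ^ ((2 * ϑ i - 2) / ϑ i) := by
            rw [← Real.rpow_mul (abs_nonneg _),
              show ϑ i * ((2 * ϑ i - 2) / ϑ i) = 2 * ϑ i - 2 from by
                rw [mul_comm, div_mul_cancel₀ _ (hϑpos i).ne']]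
          have h8 : (2 * ϑ i - 2) / ϑ i = (2:ℝ) - 2 / ϑ i := by
            rw [sub_div, mul_div_cancel_right₀ _ (hϑpos i).ne']
          rw [h7, ← h8]
          apply Real.rpow_le_rpow_of_nonpos (hti i) (htS i)
          apply div_nonpos_of_nonpos_of_nonneg _ (hϑpos i).le
          nlinarith [(hϑ i).2]
        calc α * (γ * M - 1) / N * S ^ (-γ)
            ≤ (γ * m i * (γ * m i + 1) * ϑ i ^ 2 * A ^ (γ - γ * m i - 2 / ϑ i)) * S ^ (-γ) :=
              mul_le_mul_of_nonneg_right h5 (Real.rpow_nonneg hS0.le _)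
          _ ≤ (γ * m i * (γ * m i + 1) * ϑ i ^ 2 * S ^ (γ - γ * m i - 2 / ϑ i)) * S ^ (-γ) := by
              apply mul_le_mul_of_nonneg_right _ (Real.rpow_nonneg hS0.le _)
              exact mul_le_mul_of_nonneg_left hAe hcpos
          _ = γ * m i * (γ * m i + 1) * ϑ i ^ 2 * S ^ ((γ - γ * m i - 2 / ϑ i) + -γ) := by
              rw [Real.rpow_add hS0]; ring
          _ = γ * m i * (γ * m i + 1) * ϑ i ^ 2
              * (S ^ (2 - 2 / ϑ i) * S ^ (-(γ * m i) - 2)) := by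
              rw [← Real.rpow_add hS0]
              congr 1
              ring
          _ ≤ γ * m i * (γ * m i + 1) * ϑ i ^ 2
              * (|y i| ^ (2 * ϑ i - 2) * S ^ (-(γ * m i) - 2)) := by
              apply mul_le_mul_of_nonneg_left _ hcpos
              exact mul_le_mul_of_nonneg_right hstep (Real.rpow_nonneg hS0.le _)
          _ = γ * m i * (γ * m i + 1) * ϑ i ^ 2 * |y i| ^ (2 * ϑ i - 2)
              * S ^ (-(γ * m i) - 2) := by ring
      have hb2 : 0 ≤ -(γ * m i * ϑ i * (ϑ i - 1) * |y i| ^ (ϑ i - 2) * S ^ (-(γ * m i) - 1)) := by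
        have ha1 : (0:ℝ) ≤ 1 - ϑ i := by linarith [(hϑ i).2]
        have h0 : 0 ≤ γ * m i * ϑ i * (1 - ϑ i) * |y i| ^ (ϑ i - 2) * S ^ (-(γ * m i) - 1) :=
          mul_nonneg (mul_nonneg (mul_nonneg (mul_nonneg hqpos.le (hϑpos i).le) ha1)
            (Real.rpow_nonneg (abs_nonneg _) _)) (Real.rpow_nonneg hS0.le _)
        calc (0:ℝ) ≤ γ * m i * ϑ i * (1 - ϑ i) * |y i| ^ (ϑ i - 2) * S ^ (-(γ * m i) - 1) := h0
          _ = -(γ * m i * ϑ i * (ϑ i - 1) * |y i| ^ (ϑ i - 2) * S ^ (-(γ * m i) - 1)) := by ring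
      have hb3 : α * σ i * (γ * ϑ i * |y i| ^ ϑ i * S ^ (-γ - 1))
          ≤ α * γ * M * (|y i| ^ ϑ i) * S ^ (-γ - 1) := by
        calc α * σ i * (γ * ϑ i * |y i| ^ ϑ i * S ^ (-γ - 1))
            = (σ i * ϑ i) * (α * γ * |y i| ^ ϑ i * S ^ (-γ - 1)) := by ring
          _ ≤ M * (α * γ * |y i| ^ ϑ i * S ^ (-γ - 1)) := by
              apply mul_le_mul_of_nonneg_right (hM i)
              have := Real.rpow_nonneg hS0.le (-γ - 1)
              positivity
          _ = α * γ * M * (|y i| ^ ϑ i) * S ^ (-γ - 1) := by ring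
      have hdist : α * σ i * (S ^ (-γ) - γ * ϑ i * |y i| ^ ϑ i * S ^ (-γ - 1))
          = α * σ i * S ^ (-γ) - α * σ i * (γ * ϑ i * |y i| ^ ϑ i * S ^ (-γ - 1)) := by ring
      rw [hdist]
      linarith
    -- summing up
    have hsum_le := Finset.sum_le_sum fun i (_ : i ∈ Finset.univ) => key i
    refine le_trans ?_ hsum_le
    have hsum_eq : ∑ i : Fin N, (α * (γ * M - 1) / N * S ^ (-γ) + α * σ i * S ^ (-γ)
          - α * γ * M * (|y i| ^ ϑ i) * S ^ (-γ - 1))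
        = (N:ℝ) * (α * (γ * M - 1) / N * S ^ (-γ)) + (∑ i, σ i) * (α * S ^ (-γ))
          - (α * γ * M * S ^ (-γ - 1)) * (∑ i, |y i| ^ ϑ i) := by
      have hmid : ∑ i, α * σ i * S ^ (-γ) = (∑ i, σ i) * (α * S ^ (-γ)) := by
        rw [Finset.sum_mul]
        exact Finset.sum_congr rfl fun i _ => by ring
      have hmid2 : ∑ i, α * γ * M * (|y i| ^ ϑ i) * S ^ (-γ - 1)
          = (α * γ * M * S ^ (-γ - 1)) * ∑ i, |y i| ^ ϑ i := by
        rw [Finset.mul_sum]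
        exact Finset.sum_congr rfl fun i _ => by ring
      rw [Finset.sum_sub_distrib, Finset.sum_add_distrib, hmid, hmid2, Finset.sum_const,
        Finset.card_univ, Fintype.card_fin, nsmul_eq_mul]
    rw [hsum_eq, hσsum]
    have hpow : S ^ (-γ) = S ^ (-γ - 1) * S := by
      rw [← Real.rpow_add_one hS0.ne']
      congr 1
      ring
    have hts : ∑ i, |y i| ^ ϑ i = S - A := by rw [hSdef]; ring
    rw [hts]
    have heq : (N:ℝ) * (α * (γ * M - 1) / N * S ^ (-γ)) + 1 * (α * S ^ (-γ))
        - (α * γ * M * S ^ (-γ - 1)) * (S - A) = α * γ * M * A * S ^ (-γ - 1) := by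
      rw [hpow]
      field_simp
      ring
    rw [heq]
    have := Real.rpow_nonneg hS0.le (-γ - 1)
    positivity
  · -- part (b): integrability
    have hWpos : 0 < ∑ j, (ϑ j)⁻¹ :=
      Finset.sum_pos (fun i _ => inv_pos.2 (hϑpos i)) Finset.univ_nonempty
    set W : ℝ := ∑ j, (ϑ j)⁻¹ with hWdef
    have hWγ : W < γ := by
      have hlt : ∀ i, (ϑ i)⁻¹ < γ * (1 - m i) / 2 := by
        intro i
        have h2 := h2cond i
        rw [← one_div, div_lt_div_iff₀ (hϑpos i) two_pos]
        nlinarith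
      calc W < ∑ i, γ * (1 - m i) / 2 :=
            Finset.sum_lt_sum_of_nonempty Finset.univ_nonempty fun i _ => hlt i
        _ = γ * ((N:ℝ) - ∑ i, m i) / 2 := by
            rw [← Finset.sum_div, ← Finset.mul_sum, Finset.sum_sub_distrib, Finset.sum_const,
              Finset.card_univ, Fintype.card_fin, nsmul_eq_mul, mul_one]
        _ < γ := by
            rw [hsm]
            have h2 : 1 - mbar < 2 / (N:ℝ) := by linarith
            have h1 : (N:ℝ) * (1 - mbar) < 2 := by
              calc (N:ℝ) * (1 - mbar) < (N:ℝ) * (2 / (N:ℝ)) :=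
                    mul_lt_mul_of_pos_left h2 hNpos
                _ = 2 := by field_simp
            nlinarith [mul_pos hγ (by linarith : (0:ℝ) < 2 - (N:ℝ) * (1 - mbar))]
    set w : Fin N → ℝ := fun i => (ϑ i)⁻¹ / W with hwdef
    have hw_pos : ∀ i, 0 < w i := fun i => div_pos (inv_pos.2 (hϑpos i)) hWpos
    have hw_sum : ∑ i, w i = 1 := by
      rw [hwdef, ← Finset.sum_div, hWdef, div_self hWpos.ne']
    have hw_le1 : ∀ i, w i ≤ 1 := by
      intro i
      rw [hwdef, div_le_one hWpos]
      exact Finset.single_le_sum (fun j _ => (inv_pos.2 (hϑpos j)).le) (Finset.mem_univ i)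
    have h1d : ∀ i, Integrable fun s : ℝ => (A / (N:ℝ) + |s| ^ ϑ i) ^ (-(γ * w i)) := by
      intro i
      apply my_integrable_1d _ _ _ (by positivity) (hϑpos i) (mul_pos hγ (hw_pos i))
      have heq2 : ϑ i * (γ * w i) = γ / W := by
        rw [hwdef, show ϑ i * (γ * ((ϑ i)⁻¹ / W)) = γ * (ϑ i * (ϑ i)⁻¹) / W from by ring,
          mul_inv_cancel₀ (hϑpos i).ne', mul_one]
      rw [heq2]
      exact (one_lt_div hWpos).2 hWγ
    have hprod : Integrable fun x : Fin N → ℝ =>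
        ∏ i, (A / (N:ℝ) + |x i| ^ ϑ i) ^ (-(γ * w i)) :=
      Integrable.fintype_prod (f := fun i (s : ℝ) => (A / (N:ℝ) + |s| ^ ϑ i) ^ (-(γ * w i))) h1d
    have hcontF : Continuous Funder := by
      have hFeq : Funder = fun y => (A + ∑ i, |y i| ^ ϑ i) ^ (-γ) := funext hFunder
      rw [hFeq]
      apply Continuous.rpow_const
      · exact continuous_const.add (continuous_finset_sum _ fun i _ =>
          (continuous_apply i).abs.rpow_const fun x => Or.inr (hϑpos i).le)
      · intro x
        left
        have h0 : 0 ≤ ∑ i, |x i| ^ ϑ i :=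
          Finset.sum_nonneg fun i _ => Real.rpow_nonneg (abs_nonneg _) _
        exact ne_of_gt (by linarith)
    refine hprod.mono' hcontF.aestronglyMeasurable (Filter.Eventually.of_forall fun y => ?_)
    have hb : ∀ i : Fin N, (0:ℝ) < A / (N:ℝ) + |y i| ^ ϑ i := fun i => by positivity
    have hgm := Real.geom_mean_le_arith_mean_weighted Finset.univ w
      (fun i => A / (N:ℝ) + |y i| ^ ϑ i) (fun i _ => (hw_pos i).le) hw_sum
      (fun i _ => (hb i).le)
    have hsum_b : ∑ i, w i * (A / (N:ℝ) + |y i| ^ ϑ i) ≤ A + ∑ i, |y i| ^ ϑ i := by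
      calc ∑ i, w i * (A / (N:ℝ) + |y i| ^ ϑ i) ≤ ∑ i, (A / (N:ℝ) + |y i| ^ ϑ i) :=
            Finset.sum_le_sum fun i _ => mul_le_of_le_one_left (hb i).le (hw_le1 i)
        _ = A + ∑ i, |y i| ^ ϑ i := by
            rw [Finset.sum_add_distrib, Finset.sum_const, Finset.card_univ, Fintype.card_fin,
              nsmul_eq_mul]
            congr 1
            rw [mul_comm, div_mul_cancel₀ _ hNne]
    have hprodpos : 0 < ∏ i, (A / (N:ℝ) + |y i| ^ ϑ i) ^ w i :=
      Finset.prod_pos fun i _ => Real.rpow_pos_of_pos (hb i) _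
    have hbase : (0:ℝ) < A + ∑ i, |y i| ^ ϑ i := by
      have : 0 ≤ ∑ i, |y i| ^ ϑ i :=
        Finset.sum_nonneg fun i _ => Real.rpow_nonneg (abs_nonneg _) _
      positivity
    rw [hFunder, Real.norm_eq_abs, abs_of_nonneg (Real.rpow_nonneg hbase.le _)]
    calc (A + ∑ i, |y i| ^ ϑ i) ^ (-γ)
        ≤ (∏ i, (A / (N:ℝ) + |y i| ^ ϑ i) ^ w i) ^ (-γ) :=
          Real.rpow_le_rpow_of_nonpos hprodpos (le_trans hgm hsum_b) (by linarith)
      _ = ∏ i, ((A / (N:ℝ) + |y i| ^ ϑ i) ^ w i) ^ (-γ) := by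
          rw [Real.finset_prod_rpow _ _ (fun i _ => Real.rpow_nonneg (hb i).le _) _]
      _ = ∏ i, (A / (N:ℝ) + |y i| ^ ϑ i) ^ (-(γ * w i)) := Finset.prod_congr rfl fun i _ => by
          rw [← Real.rpow_mul (hb i).le]
          congr 1
          ring
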